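/- arXiv:2001.02466 — 3 statements merged into one kernel-verified Lean document; each statement's English description precedes it below -/
import Mathlib

section
/- Let Φ_1, Φ_2, Φ_3 be real symmetric D×D matrices (D ≥ 1) such that Φ_1 and Φ_3 are positive semi-definite and λ_min(Φ_2) > −(2√6/3)·√(λ_min(Φ_1)·λ_min(Φ_3)). Then for every real t > 0 the matrix t·Φ_1 + (t²/2)·Φ_2 + (t³/6)·Φ_3 is positive definite. -/
/-- The smallest eigenvalue of a real symmetric matrix, characterised as the
infimum of the quadratic form `vᵀ A v` over unit vectors `v`. -/
noncomputable def lambdaMin {D : ℕ} (A : Matrix (Fin D) (Fin D) ℝ) : ℝ :=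
  ⨅ v : {v : Fin D → ℝ // ∑ i, (v i) ^ 2 = 1},
    dotProduct (v : Fin D → ℝ) (A.mulVec (v : Fin D → ℝ))

lemma abs_le_one_of_unit {D : ℕ} (v : Fin D → ℝ) (hv : ∑ i, (v i) ^ 2 = 1) (i : Fin D) :
    |v i| ≤ 1 := by
  have h : (v i) ^ 2 ≤ 1 := hv ▸ Finset.single_le_sum (fun j _ => sq_nonneg (v j)) (Finset.mem_univ i)
  nlinarith [abs_nonneg (v i), sq_abs (v i)]

lemma quad_bddBelow {D : ℕ} (A : Matrix (Fin D) (Fin D) ℝ) :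
    BddBelow (Set.range fun v : {v : Fin D → ℝ // ∑ i, (v i) ^ 2 = 1} =>
      dotProduct (v : Fin D → ℝ) (A.mulVec (v : Fin D → ℝ))) := by
  refine ⟨-(∑ i, ∑ j, |A i j|), ?_⟩
  rintro x ⟨⟨v, hv⟩, rfl⟩
  simp only [dotProduct, Matrix.mulVec, dotProduct, Finset.mul_sum]
  rw [← Finset.sum_neg_distrib]
  refine Finset.sum_le_sum fun i _ => ?_
  rw [← Finset.sum_neg_distrib]
  refine Finset.sum_le_sum fun j _ => ?_
  have h1 := abs_le_one_of_unit v hv i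
  have h2 := abs_le_one_of_unit v hv j
  have : |v i * (A i j * v j)| ≤ |A i j| := by
    rw [abs_mul, abs_mul]
    calc |v i| * (|A i j| * |v j|) ≤ 1 * (|A i j| * 1) := by
          apply mul_le_mul h1 (by exact mul_le_mul_of_nonneg_left h2 (abs_nonneg _))
            (by positivity) zero_le_one
      _ = |A i j| := by ring
  nlinarith [neg_abs_le (v i * (A i j * v j))]

lemma lambdaMin_le {D : ℕ} (A : Matrix (Fin D) (Fin D) ℝ) (v : Fin D → ℝ)
    (hv : ∑ i, (v i) ^ 2 = 1) :
    lambdaMin A ≤ dotProduct v (A.mulVec v) :=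
  ciInf_le (quad_bddBelow A) ⟨v, hv⟩

lemma quad_ge {D : ℕ} (A : Matrix (Fin D) (Fin D) ℝ) (x : Fin D → ℝ) :
    lambdaMin A * (∑ i, (x i) ^ 2) ≤ dotProduct x (A.mulVec x) := by
  set s : ℝ := ∑ i, (x i) ^ 2 with hs
  have hs0 : 0 ≤ s := Finset.sum_nonneg fun i _ => sq_nonneg _
  rcases eq_or_lt_of_le hs0 with h | h
  · have hx : x = 0 := by
      funext i
      have : (x i) ^ 2 = 0 := le_antisymm
        (h ▸ Finset.single_le_sum (fun j _ => sq_nonneg (x j)) (Finset.mem_univ i))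
        (sq_nonneg _)
      exact pow_eq_zero_iff (n := 2) (by norm_num) |>.mp this
    simp [hx, ← h]
  · set r : ℝ := (Real.sqrt s)⁻¹ with hr
    have hrs : Real.sqrt s > 0 := Real.sqrt_pos.mpr h
    have hr2 : r ^ 2 = s⁻¹ := by
      rw [hr, inv_pow, Real.sq_sqrt hs0]
    have hv : ∑ i, ((r • x) i) ^ 2 = 1 := by
      simp only [Pi.smul_apply, smul_eq_mul, mul_pow]
      rw [← Finset.mul_sum, ← hs, hr2]
      exact inv_mul_cancel₀ h.ne'
    have key := lambdaMin_le A (r • x) hv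
    rw [Matrix.mulVec_smul, smul_dotProduct, dotProduct_smul,
      smul_eq_mul, smul_eq_mul, ← mul_assoc, ← sq, hr2] at key
    calc lambdaMin A * s ≤ (s⁻¹ * dotProduct x (A.mulVec x)) * s := by
          exact mul_le_mul_of_nonneg_right key hs0
      _ = dotProduct x (A.mulVec x) := by field_simp

lemma lambdaMin_nonneg {D : ℕ} (hD : 1 ≤ D) {A : Matrix (Fin D) (Fin D) ℝ}
    (h : A.PosSemidef) : 0 ≤ lambdaMin A := by
  have : Nonempty {v : Fin D → ℝ // ∑ i, (v i) ^ 2 = 1} := by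
    refine ⟨⟨Pi.single ⟨0, hD⟩ 1, ?_⟩⟩
    simp [Pi.single_apply, Finset.sum_ite_eq']
  refine le_ciInf fun ⟨v, hv⟩ => ?_
  have := h.dotProduct_mulVec_nonneg v
  simpa using this

lemma core_ineq (t s a b c l1 l2 l3 p q : ℝ)
    (ht : 0 < t) (hs : 0 < s)
    (ha : l1 * s ≤ a) (hb : l2 * s ≤ b) (hc : l3 * s ≤ c)
    (hl1 : 0 ≤ l1) (hl3 : 0 ≤ l3) (ha0 : 0 ≤ a) (hc0 : 0 ≤ c)
    (hp : p ^ 2 = l1 * l3) (hp0 : 0 ≤ p)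
    (hq : q ^ 2 = 6) (hq0 : 0 < q)
    (h2 : -(2 * q / 3) * p < l2) :
    0 < t * a + t ^ 2 / 2 * b + t ^ 3 / 6 * c := by
  have hX : 0 ≤ 6 * t * a := by positivity
  have hY : 0 ≤ t ^ 3 * c := by positivity
  have hZ : 0 ≤ q * t ^ 2 * s * p := by positivity
  have hac : s ^ 2 * p ^ 2 ≤ a * c := by nlinarith [mul_le_mul ha hc (by nlinarith) ha0]
  have hXY : (q * t ^ 2 * s * p) ^ 2 ≤ (6 * t * a) * (t ^ 3 * c) := by
    nlinarith [mul_le_mul_of_nonneg_left hac (by positivity : (0:ℝ) ≤ 6 * t ^ 4)]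
  have h1 : Real.sqrt ((q * t ^ 2 * s * p) ^ 2) ≤ Real.sqrt ((6 * t * a) * (t ^ 3 * c)) :=
    Real.sqrt_le_sqrt hXY
  rw [Real.sqrt_sq hZ, Real.sqrt_mul hX] at h1
  have h2' := two_mul_le_add_sq (Real.sqrt (6 * t * a)) (Real.sqrt (t ^ 3 * c))
  rw [Real.sq_sqrt hX, Real.sq_sqrt hY] at h2'
  have hsum : 2 * (q * t ^ 2 * s * p) ≤ 6 * t * a + t ^ 3 * c := by
    nlinarith [mul_le_mul_of_nonneg_left h1 (by norm_num : (0:ℝ) ≤ 2)]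
  nlinarith [mul_lt_mul_of_pos_left h2 hs, mul_pos (mul_pos ht ht) hs, hsum]

/-- Part 2 of Proposition 1 of the paper: if `Φ₁, Φ₃` are positive
semi-definite and `λ_min(Φ₂) > −(2√6/3)·√(λ_min(Φ₁)·λ_min(Φ₃))`, then the
third-order TME covariance estimate `t•Φ₁ + (t²/2)•Φ₂ + (t³/6)•Φ₃` is positive
definite for every `t > 0`. -/
theorem tme3_posDef
    {D : ℕ} (hD : 1 ≤ D)
    (Φ₁ Φ₂ Φ₃ : Matrix (Fin D) (Fin D) ℝ)
    (h₂symm : Φ₂.IsSymm)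
    (h₁ : Φ₁.PosSemidef) (h₃ : Φ₃.PosSemidef)
    (h₂ : lambdaMin Φ₂ >
      -(2 * Real.sqrt 6 / 3) * Real.sqrt (lambdaMin Φ₁ * lambdaMin Φ₃)) :
    ∀ t : ℝ, 0 < t →
      (t • Φ₁ + (t ^ 2 / 2) • Φ₂ + (t ^ 3 / 6) • Φ₃).PosDef := by
  intro t ht
  have hl1 : 0 ≤ lambdaMin Φ₁ := lambdaMin_nonneg hD h₁
  have hl3 : 0 ≤ lambdaMin Φ₃ := lambdaMin_nonneg hD h₃
  rw [Matrix.posDef_iff_dotProduct_mulVec]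
  constructor
  · -- Hermitian
    have e1 : Φ₁.transpose = Φ₁ := by
      have := h₁.1
      rwa [Matrix.IsHermitian, Matrix.conjTranspose_eq_transpose_of_trivial] at this
    have e3 : Φ₃.transpose = Φ₃ := by
      have := h₃.1
      rwa [Matrix.IsHermitian, Matrix.conjTranspose_eq_transpose_of_trivial] at this
    have e2 : Φ₂.transpose = Φ₂ := h₂symm
    rw [Matrix.IsHermitian, Matrix.conjTranspose_eq_transpose_of_trivial]
    simp [Matrix.transpose_add, Matrix.transpose_smul, e1, e2, e3]
  · intro x hx
    have hs : 0 < ∑ i, (x i) ^ 2 := by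
      rcases Function.ne_iff.mp hx with ⟨i, hi⟩
      have hi' : x i ≠ 0 := by simpa using hi
      have : 0 < (x i) ^ 2 := by simpa [sq_abs] using pow_pos (abs_pos.mpr hi') 2
      exact lt_of_lt_of_le this (Finset.single_le_sum (fun j _ => sq_nonneg (x j)) (Finset.mem_univ i))
    set s := ∑ i, (x i) ^ 2
    have ha := quad_ge Φ₁ x
    have hb := quad_ge Φ₂ x
    have hc := quad_ge Φ₃ x
    have ha0 : 0 ≤ dotProduct x (Φ₁.mulVec x) := by simpa using h₁.dotProduct_mulVec_nonneg x
    have hc0 : 0 ≤ dotProduct x (Φ₃.mulVec x) := by simpa using h₃.dotProduct_mulVec_nonneg x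
    have hexp : dotProduct (star x)
        ((t • Φ₁ + (t ^ 2 / 2) • Φ₂ + (t ^ 3 / 6) • Φ₃).mulVec x) =
        t * dotProduct x (Φ₁.mulVec x)
        + t ^ 2 / 2 * dotProduct x (Φ₂.mulVec x)
        + t ^ 3 / 6 * dotProduct x (Φ₃.mulVec x) := by
      simp [Matrix.add_mulVec, Matrix.smul_mulVec, dotProduct_add,
        dotProduct_smul, star_trivial, smul_eq_mul]
    rw [hexp]
    have hp : (Real.sqrt (lambdaMin Φ₁ * lambdaMin Φ₃)) ^ 2 = lambdaMin Φ₁ * lambdaMin Φ₃ :=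
      Real.sq_sqrt (mul_nonneg hl1 hl3)
    have hq : (Real.sqrt 6) ^ 2 = 6 := Real.sq_sqrt (by norm_num)
    exact core_ineq t s _ _ _ (lambdaMin Φ₁) (lambdaMin Φ₂) (lambdaMin Φ₃)
      (Real.sqrt (lambdaMin Φ₁ * lambdaMin Φ₃)) (Real.sqrt 6)
      ht hs ha hb hc hl1 hl3 ha0 hc0 hp (Real.sqrt_nonneg _) hq
      (Real.sqrt_pos.mpr (by norm_num)) h₂
end

section
/- Let M ≥ 1 and D ≥ 1 be integers and Φ_1, …, Φ_M real symmetric D×D matrices. Then the following are equivalent: (i) for every m with 1 ≤ m ≤ M and every real t > 0, the matrix Σ_m(t) = Σ_{r=1}^m (t^r / r!) · Φ_r is positive definite; (ii) Φ_1 is positive definite and Φ_r is positive semi-definite for every r with 1 ≤ r ≤ M. -/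
open Matrix Finset Filter

lemma quad_sum {D : ℕ} (s : Finset ℕ) (c : ℕ → ℝ) (Φ : ℕ → Matrix (Fin D) (Fin D) ℝ)
    (x : Fin D → ℝ) :
    x ⬝ᵥ ((∑ r ∈ s, c r • Φ r) *ᵥ x) = ∑ r ∈ s, c r * (x ⬝ᵥ (Φ r *ᵥ x)) := by
  induction s using Finset.induction with
  | empty => simp
  | insert _ _ hnot ih =>
    rw [Finset.sum_insert hnot, Finset.sum_insert hnot, Matrix.add_mulVec,
      dotProduct_add, ih, Matrix.smul_mulVec, dotProduct_smul, smul_eq_mul]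

lemma symm_herm {D : ℕ} {A : Matrix (Fin D) (Fin D) ℝ} (h : A.IsSymm) : A.IsHermitian := by
  rwa [Matrix.IsHermitian, Matrix.conjTranspose, Matrix.IsSymm] at *

lemma herm_smul {D : ℕ} {A : Matrix (Fin D) (Fin D) ℝ} (c : ℝ) (h : A.IsHermitian) :
    (c • A).IsHermitian := by
  rw [Matrix.IsHermitian, Matrix.conjTranspose_smul, h.eq]
  simp

lemma psd_smul {D : ℕ} {A : Matrix (Fin D) (Fin D) ℝ} {c : ℝ} (hc : 0 ≤ c)
    (h : A.PosSemidef) : (c • A).PosSemidef := by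
  refine Matrix.posSemidef_iff_dotProduct_mulVec.mpr ⟨herm_smul c h.1, fun x => ?_⟩
  rw [Matrix.smul_mulVec, dotProduct_smul, smul_eq_mul]
  exact mul_nonneg hc (h.dotProduct_mulVec_nonneg x)

lemma pd_smul {D : ℕ} {A : Matrix (Fin D) (Fin D) ℝ} {c : ℝ} (hc : 0 < c)
    (h : A.PosDef) : (c • A).PosDef := by
  refine Matrix.posDef_iff_dotProduct_mulVec.mpr ⟨herm_smul c h.1, fun x hx => ?_⟩
  rw [Matrix.smul_mulVec, dotProduct_smul, smul_eq_mul]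
  exact mul_pos hc (h.dotProduct_mulVec_pos hx)

lemma psd_sum {D : ℕ} (s : Finset ℕ) (f : ℕ → Matrix (Fin D) (Fin D) ℝ)
    (h : ∀ r ∈ s, (f r).PosSemidef) : (∑ r ∈ s, f r).PosSemidef := by
  induction s using Finset.induction with
  | empty => exact Matrix.PosSemidef.zero
  | insert _ _ hnot ih =>
    rw [Finset.sum_insert hnot]
    exact ((h _ (Finset.mem_insert_self _ _)).add
      (ih fun r hr => h r (Finset.mem_insert_of_mem hr)))

/-- Precise form of the paper's remark after Theorem 1: the TME covariance
estimates `Σ_m(t) = Σ_{r=1}^m (t^r/r!) Φ_r` of every order `m = 1, …, M` are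
positive definite for all `t > 0` if and only if `Φ₁` is positive definite and
every `Φ_r`, `1 ≤ r ≤ M`, is positive semi-definite. -/
theorem tme_all_orders_posDef_iff
    {D M : ℕ} (hM : 1 ≤ M) (hD : 1 ≤ D)
    (Φ : ℕ → Matrix (Fin D) (Fin D) ℝ)
    (hΦ : ∀ r ∈ Finset.Icc 1 M, (Φ r).IsSymm) :
    (∀ m, 1 ≤ m → m ≤ M → ∀ t : ℝ, 0 < t →
        (∑ r ∈ Finset.Icc 1 m, (t ^ r / (r.factorial : ℝ)) • Φ r).PosDef) ↔
      ((Φ 1).PosDef ∧ ∀ r ∈ Finset.Icc 1 M, (Φ r).PosSemidef) := by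
  constructor
  · intro h
    constructor
    · have h1 := h 1 le_rfl hM 1 one_pos
      simpa using h1
    · intro r hr
      obtain ⟨hr1, hrM⟩ := Finset.mem_Icc.mp hr
      refine Matrix.posSemidef_iff_dotProduct_mulVec.mpr ⟨symm_herm (hΦ r hr), fun x => ?_⟩
      rw [star_trivial]
      set c : ℕ → ℝ := fun s => x ⬝ᵥ (Φ s *ᵥ x) with hc
      show 0 ≤ c r
      by_cases hx : x = 0
      · simp [hc, hx]
      -- key positivity
      have key : ∀ t : ℝ, 0 < t →
          0 < ∑ s ∈ Finset.Icc 1 r, (t ^ s / (s.factorial : ℝ)) * c s := by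
        intro t ht
        have := (h r hr1 hrM t ht).dotProduct_mulVec_pos hx
        rwa [star_trivial, quad_sum] at this
      set g : ℝ → ℝ := fun t => ∑ s ∈ Finset.Icc 1 r,
        ((r.factorial : ℝ) / (s.factorial : ℝ)) * c s * (t⁻¹) ^ (r - s) with hg
      have hlim : Tendsto g atTop (nhds (c r)) := by
        have hsum : Tendsto g atTop (nhds (∑ s ∈ Finset.Icc 1 r,
            ((r.factorial : ℝ) / (s.factorial : ℝ)) * c s * (0 : ℝ) ^ (r - s))) := by
          apply tendsto_finset_sum
          intro s _
          exact (tendsto_const_nhds.mul (tendsto_inv_atTop_zero.pow _))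
        have heq : (∑ s ∈ Finset.Icc 1 r,
            ((r.factorial : ℝ) / (s.factorial : ℝ)) * c s * (0 : ℝ) ^ (r - s)) = c r := by
          rw [Finset.sum_eq_single r]
          · rw [Nat.sub_self, pow_zero, mul_one, div_self, one_mul]
            exact_mod_cast (Nat.factorial_pos r).ne'
          · intro s hs hne
            have hlt : s < r := lt_of_le_of_ne (Finset.mem_Icc.mp hs).2 hne
            rw [zero_pow (Nat.sub_ne_zero_of_lt hlt), mul_zero]
          · intro habs
            exact absurd (Finset.mem_Icc.mpr ⟨hr1, le_rfl⟩) habs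
        rwa [heq] at hsum
      refine ge_of_tendsto hlim ?_
      filter_upwards [eventually_gt_atTop (0 : ℝ)] with t ht
      have hgt : g t = ((r.factorial : ℝ) / t ^ r) *
          ∑ s ∈ Finset.Icc 1 r, (t ^ s / (s.factorial : ℝ)) * c s := by
        rw [Finset.mul_sum]
        refine Finset.sum_congr rfl fun s hs => ?_
        obtain ⟨hs1, hsr⟩ := Finset.mem_Icc.mp hs
        have htr : t ^ r = t ^ s * t ^ (r - s) := by
          rw [← pow_add, Nat.add_sub_cancel' hsr]
        field_simp [htr]
        rw [one_div, inv_pow, htr, mul_comm (t ^ s), ← mul_assoc, mul_assoc (c s),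
          inv_mul_cancel₀ (pow_ne_zero _ ht.ne'), mul_one]
      rw [hgt]
      have := key t ht
      positivity
  · rintro ⟨h1, hs⟩ m hm1 hmM t ht
    have hmem : (1 : ℕ) ∈ Finset.Icc 1 m := Finset.mem_Icc.mpr ⟨le_rfl, hm1⟩
    rw [← Finset.add_sum_erase _ _ hmem]
    refine Matrix.PosDef.add_posSemidef ?_ ?_
    · exact pd_smul (by positivity) h1
    · refine psd_sum _ _ fun s hsmem => ?_
      obtain ⟨hne, hsI⟩ := Finset.mem_erase.mp hsmem
      obtain ⟨hs1, hsm⟩ := Finset.mem_Icc.mp hsI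
      exact psd_smul (by positivity) (hs s (Finset.mem_Icc.mpr ⟨hs1, hsm.trans hmM⟩))
end

section
/- Let f: ℝ → ℝ be four times continuously differentiable and Γ ∈ ℝ a constant. Define the generator A acting on twice differentiable g: ℝ → ℝ by (A g)(x) = f(x)·g'(x) + (Γ/2)·g''(x), and write A^r for its r-fold iteration. Then for every x ∈ ℝ: A³(y ↦ y²)(x) − 2x·A³(y ↦ y)(x) − 6·A(y ↦ y)(x)·A²(y ↦ y)(x) = 2·(2·f'(x)² + 2·f(x)·f''(x) + f'''(x)·Γ)·Γ. -/
/-- The infinitesimal generator of the scalar SDE `dx = f(x) dt + L dW` with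
`Γ = L²Q`: `(A g)(x) = f(x) g'(x) + (Γ/2) g''(x)`. -/
noncomputable def gen1 (f : ℝ → ℝ) (Γ : ℝ) (g : ℝ → ℝ) : ℝ → ℝ :=
  fun x => f x * deriv g x + (Γ / 2) * deriv (deriv g) x

/-- Example 2 of the paper, third-order coefficient: for four times
continuously differentiable `f`,
`Φ_{x,3} = A³(x²) − 2x·A³(x) − 6·A(x)·A²(x) = 2(2 f'(x)² + 2 f(x) f''(x) + f'''(x) Γ) Γ`. -/
theorem tme_phi_three (f : ℝ → ℝ) (hf : ContDiff ℝ 4 f) (Γ : ℝ) :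
    ∀ x : ℝ,
      gen1 f Γ (gen1 f Γ (gen1 f Γ (fun y => y ^ 2))) x
        - 2 * x * gen1 f Γ (gen1 f Γ (gen1 f Γ (fun y => y))) x
        - 6 * gen1 f Γ (fun y => y) x * gen1 f Γ (gen1 f Γ (fun y => y)) x
      = 2 * (2 * (deriv f x) ^ 2 + 2 * f x * deriv (deriv f) x
          + deriv (deriv (deriv f)) x * Γ) * Γ := by
  have h3 : ContDiff ℝ 3 (deriv f) :=
    (contDiff_succ_iff_deriv.mp (show ContDiff ℝ (3+1) f by norm_num [hf])).2.2
  have h2 : ContDiff ℝ 2 (deriv (deriv f)) :=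
    (contDiff_succ_iff_deriv.mp (show ContDiff ℝ (2+1) (deriv f) by norm_num [h3])).2.2
  have h1 : ContDiff ℝ 1 (deriv (deriv (deriv f))) :=
    (contDiff_succ_iff_deriv.mp (show ContDiff ℝ (1+1) (deriv (deriv f)) by norm_num [h2])).2.2
  have hdf : Differentiable ℝ f := hf.differentiable (by norm_num)
  have hdf1 : Differentiable ℝ (deriv f) := h3.differentiable (by norm_num)
  have hdf2 : Differentiable ℝ (deriv (deriv f)) := h2.differentiable (by norm_num)
  have hdf3 : Differentiable ℝ (deriv (deriv (deriv f))) := h1.differentiable (by norm_num)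
  set f1 := deriv f with hf1
  set f2 := deriv f1 with hf2d
  set f3 := deriv f2 with hf3d
  set f4 := deriv f3 with hf4d
  -- basic derivatives
  have Did : deriv (fun y : ℝ => y) = fun _ => (1:ℝ) := by
    funext y; simp
  have Dsq : deriv (fun y : ℝ => y ^ 2) = fun y => 2 * y := by
    funext y; simp [mul_comm]
  have D1 : deriv (fun _ : ℝ => (1:ℝ)) = fun _ => (0:ℝ) := by funext y; simp
  have D2x : deriv (fun y : ℝ => 2 * y) = fun _ => (2:ℝ) := by
    funext y
    simpa using (((hasDerivAt_id y).const_mul (2:ℝ))).deriv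
  -- A(x²) and A(x)
  have A1sq : gen1 f Γ (fun y => y ^ 2) = fun x => 2 * x * f x + Γ := by
    funext x
    simp only [gen1, Dsq, D2x]
    ring
  have A1id : gen1 f Γ (fun y => y) = f := by
    funext x
    simp only [gen1, Did, D1]
    ring
  -- derivatives of A(x²) = 2x f + Γ
  have Da : deriv (fun x => 2 * x * f x + Γ) = fun x => 2 * f x + 2 * x * f1 x := by
    funext x
    have h : HasDerivAt (fun x => 2 * x * f x + Γ) (2 * f x + 2 * x * f1 x) x := by
      have := (((hasDerivAt_id x).const_mul (2:ℝ)).mul (hdf x).hasDerivAt).add_const Γ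
      refine HasDerivAt.congr_deriv (by simpa only [id_eq, Pi.add_def, Pi.mul_def] using this) (by ring)
    exact h.deriv
  have Db : deriv (fun x => 2 * f x + 2 * x * f1 x) = fun x => 4 * f1 x + 2 * x * f2 x := by
    funext x
    have h : HasDerivAt (fun x => 2 * f x + 2 * x * f1 x) (4 * f1 x + 2 * x * f2 x) x := by
      have := ((hdf x).hasDerivAt.const_mul (2:ℝ)).add
        (((hasDerivAt_id x).const_mul (2:ℝ)).mul (hdf1 x).hasDerivAt)
      refine HasDerivAt.congr_deriv (by simpa only [id_eq, Pi.add_def, Pi.mul_def] using this) (by ring)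
    exact h.deriv
  -- A²(x²)
  have A2sq : gen1 f Γ (fun x => 2 * x * f x + Γ)
      = fun x => f x * (2 * f x + 2 * x * f1 x) + Γ / 2 * (4 * f1 x + 2 * x * f2 x) := by
    funext x
    simp only [gen1, Da, Db]
  -- derivatives of A²(x²)
  have Dc : deriv (fun x => f x * (2 * f x + 2 * x * f1 x) + Γ / 2 * (4 * f1 x + 2 * x * f2 x))
      = fun x => (f1 x * (2 * f x + 2 * x * f1 x) + f x * (4 * f1 x + 2 * x * f2 x))
          + Γ / 2 * (6 * f2 x + 2 * x * f3 x) := by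
    funext x
    have h : HasDerivAt
        (fun x => f x * (2 * f x + 2 * x * f1 x) + Γ / 2 * (4 * f1 x + 2 * x * f2 x))
        ((f1 x * (2 * f x + 2 * x * f1 x) + f x * (4 * f1 x + 2 * x * f2 x))
          + Γ / 2 * (6 * f2 x + 2 * x * f3 x)) x := by
      have hu : HasDerivAt (fun x => 2 * f x + 2 * x * f1 x) (4 * f1 x + 2 * x * f2 x) x := by
        have := ((hdf x).hasDerivAt.const_mul (2:ℝ)).add
          (((hasDerivAt_id x).const_mul (2:ℝ)).mul (hdf1 x).hasDerivAt)
        refine HasDerivAt.congr_deriv (by simpa only [id_eq, Pi.add_def, Pi.mul_def] using this) (by ring)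
      have hv : HasDerivAt (fun x => 4 * f1 x + 2 * x * f2 x) (6 * f2 x + 2 * x * f3 x) x := by
        have := ((hdf1 x).hasDerivAt.const_mul (4:ℝ)).add
          (((hasDerivAt_id x).const_mul (2:ℝ)).mul (hdf2 x).hasDerivAt)
        refine HasDerivAt.congr_deriv (by simpa only [id_eq, Pi.add_def, Pi.mul_def] using this) (by ring)
      have := ((hdf x).hasDerivAt.mul hu).add (hv.const_mul (Γ / 2))
      refine HasDerivAt.congr_deriv (by simpa only [id_eq, Pi.add_def, Pi.mul_def] using this) (by ring)
    exact h.deriv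
  have Dd : deriv (fun x => (f1 x * (2 * f x + 2 * x * f1 x) + f x * (4 * f1 x + 2 * x * f2 x))
          + Γ / 2 * (6 * f2 x + 2 * x * f3 x))
      = fun x => (f2 x * (2 * f x + 2 * x * f1 x) + 2 * (f1 x * (4 * f1 x + 2 * x * f2 x))
          + f x * (6 * f2 x + 2 * x * f3 x)) + Γ / 2 * (8 * f3 x + 2 * x * f4 x) := by
    funext x
    have h : HasDerivAt
        (fun x => (f1 x * (2 * f x + 2 * x * f1 x) + f x * (4 * f1 x + 2 * x * f2 x))
          + Γ / 2 * (6 * f2 x + 2 * x * f3 x))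
        ((f2 x * (2 * f x + 2 * x * f1 x) + 2 * (f1 x * (4 * f1 x + 2 * x * f2 x))
          + f x * (6 * f2 x + 2 * x * f3 x)) + Γ / 2 * (8 * f3 x + 2 * x * f4 x)) x := by
      have hu : HasDerivAt (fun x => 2 * f x + 2 * x * f1 x) (4 * f1 x + 2 * x * f2 x) x := by
        have := ((hdf x).hasDerivAt.const_mul (2:ℝ)).add
          (((hasDerivAt_id x).const_mul (2:ℝ)).mul (hdf1 x).hasDerivAt)
        refine HasDerivAt.congr_deriv (by simpa only [id_eq, Pi.add_def, Pi.mul_def] using this) (by ring)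
      have hv : HasDerivAt (fun x => 4 * f1 x + 2 * x * f2 x) (6 * f2 x + 2 * x * f3 x) x := by
        have := ((hdf1 x).hasDerivAt.const_mul (4:ℝ)).add
          (((hasDerivAt_id x).const_mul (2:ℝ)).mul (hdf2 x).hasDerivAt)
        refine HasDerivAt.congr_deriv (by simpa only [id_eq, Pi.add_def, Pi.mul_def] using this) (by ring)
      have hw : HasDerivAt (fun x => 6 * f2 x + 2 * x * f3 x) (8 * f3 x + 2 * x * f4 x) x := by
        have := ((hdf2 x).hasDerivAt.const_mul (6:ℝ)).add
          (((hasDerivAt_id x).const_mul (2:ℝ)).mul (hdf3 x).hasDerivAt)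
        refine HasDerivAt.congr_deriv (by simpa only [id_eq, Pi.add_def, Pi.mul_def] using this) (by ring)
      have := (((hdf1 x).hasDerivAt.mul hu).add ((hdf x).hasDerivAt.mul hv)).add
        (hw.const_mul (Γ / 2))
      refine HasDerivAt.congr_deriv (by simpa only [id_eq, Pi.add_def, Pi.mul_def] using this) (by ring)
    exact h.deriv
  -- derivatives for the identity chain: A²(x) = f f1 + Γ/2 f2
  have A2id : gen1 f Γ f = fun x => f x * f1 x + Γ / 2 * f2 x := by
    funext x; simp only [gen1]; rfl
  have De : deriv (fun x => f x * f1 x + Γ / 2 * f2 x)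
      = fun x => (f1 x * f1 x + f x * f2 x) + Γ / 2 * f3 x := by
    funext x
    have h : HasDerivAt (fun x => f x * f1 x + Γ / 2 * f2 x)
        ((f1 x * f1 x + f x * f2 x) + Γ / 2 * f3 x) x := by
      have := ((hdf x).hasDerivAt.mul (hdf1 x).hasDerivAt).add
        ((hdf2 x).hasDerivAt.const_mul (Γ / 2))
      refine HasDerivAt.congr_deriv (by simpa only [id_eq, Pi.add_def, Pi.mul_def] using this) (by ring)
    exact h.deriv
  have Df : deriv (fun x => (f1 x * f1 x + f x * f2 x) + Γ / 2 * f3 x)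
      = fun x => (3 * (f1 x * f2 x) + f x * f3 x) + Γ / 2 * f4 x := by
    funext x
    have h : HasDerivAt (fun x => (f1 x * f1 x + f x * f2 x) + Γ / 2 * f3 x)
        ((3 * (f1 x * f2 x) + f x * f3 x) + Γ / 2 * f4 x) x := by
      have := (((hdf1 x).hasDerivAt.mul (hdf1 x).hasDerivAt).add
        ((hdf x).hasDerivAt.mul (hdf2 x).hasDerivAt)).add
        ((hdf3 x).hasDerivAt.const_mul (Γ / 2))
      refine HasDerivAt.congr_deriv (by simpa only [id_eq, Pi.add_def, Pi.mul_def] using this) (by ring)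
    exact h.deriv
  intro x
  rw [A1sq, A1id, A2sq, A2id]
  simp only [gen1, Dc, Dd, De, Df]
  ring
end
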